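/- Let $H, H' \in M_n(\mathbb{Z})$ be skew-symmetric matrices. If there exists $P \in GL_n(\mathbb{Z})$ with $P^T H P = H'$, then the quasi Laurent polynomial algebras $\mathcal{L}_q[H]$ and $\mathcal{L}_q[H']$ are isomorphic as $\mathbb{C}$-algebras; explicitly, writing $P = (\alpha_1, \dots, \alpha_n)$ in columns, the map sending the $i$-th generator of $\mathcal{L}_q[H']$ to the Laurent monomial $x^{\alpha_i}$ in $\mathcal{L}_q[H]$ extends to an algebra isomorphism. -/

import Mathlib

open Finset Matrix

/-- The reordering exponent: `x^α · x^β = q^(sigmaExp H α β) x^(α+β)` in the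
quasi Laurent polynomial algebra `L_q[H]`. -/
def sigmaExp {n : ℕ} (H : Matrix (Fin n) (Fin n) ℤ) (α β : Fin n → ℤ) : ℤ :=
  ∑ i : Fin n, ∑ j : Fin n, if j < i then α i * β j * H i j else 0

lemma sigmaExp_add_left {n : ℕ} (H : Matrix (Fin n) (Fin n) ℤ) (α α' β : Fin n → ℤ) :
    sigmaExp H (α + α') β = sigmaExp H α β + sigmaExp H α' β := by
  unfold sigmaExp
  rw [← Finset.sum_add_distrib]
  refine Finset.sum_congr rfl fun i _ => ?_
  rw [← Finset.sum_add_distrib]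
  refine Finset.sum_congr rfl fun j _ => ?_
  simp only [Pi.add_apply]
  split <;> ring

lemma sigmaExp_add_right {n : ℕ} (H : Matrix (Fin n) (Fin n) ℤ) (α β β' : Fin n → ℤ) :
    sigmaExp H α (β + β') = sigmaExp H α β + sigmaExp H α β' := by
  unfold sigmaExp
  rw [← Finset.sum_add_distrib]
  refine Finset.sum_congr rfl fun i _ => ?_
  rw [← Finset.sum_add_distrib]
  refine Finset.sum_congr rfl fun j _ => ?_
  simp only [Pi.add_apply]
  split <;> ring

lemma sigmaExp_zero_left {n : ℕ} (H : Matrix (Fin n) (Fin n) ℤ) (β : Fin n → ℤ) :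
    sigmaExp H 0 β = 0 := by
  unfold sigmaExp
  simp

/-- The antisymmetrization of `sigmaExp` is the bilinear form of `H`. -/
lemma sigmaExp_sub_swap {n : ℕ} (H : Matrix (Fin n) (Fin n) ℤ) (hskew : Hᵀ = -H)
    (α β : Fin n → ℤ) :
    sigmaExp H α β - sigmaExp H β α = α ⬝ᵥ H *ᵥ β := by
  have hdiag : ∀ i, H i i = 0 := by
    intro i
    have := congrFun (congrFun hskew i) i
    simp only [Matrix.transpose_apply, Matrix.neg_apply] at this
    omega
  have hsk : ∀ i j, H j i = - H i j := by
    intro i j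
    have := congrFun (congrFun hskew i) j
    simp only [Matrix.transpose_apply, Matrix.neg_apply] at this
    omega
  have expand : α ⬝ᵥ H *ᵥ β = ∑ i : Fin n, ∑ j : Fin n, α i * H i j * β j := by
    simp only [dotProduct, Matrix.mulVec, dotProduct, Finset.mul_sum]
    exact Finset.sum_congr rfl fun i _ => Finset.sum_congr rfl fun j _ => by ring
  rw [expand]
  have split : ∑ i : Fin n, ∑ j : Fin n, α i * H i j * β j =
      (∑ i : Fin n, ∑ j : Fin n, if j < i then α i * H i j * β j else 0)
      + ∑ i : Fin n, ∑ j : Fin n, if i < j then α i * H i j * β j else 0 := by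
    rw [← Finset.sum_add_distrib]
    refine Finset.sum_congr rfl fun i _ => ?_
    rw [← Finset.sum_add_distrib]
    refine Finset.sum_congr rfl fun j _ => ?_
    rcases lt_trichotomy (j : Fin n) i with h | h | h
    · simp [h, not_lt_of_gt h]
    · subst h; simp [hdiag]
    · simp [h, not_lt_of_gt h]
  have swap : ∑ i : Fin n, ∑ j : Fin n, (if i < j then α i * H i j * β j else 0) =
      ∑ i : Fin n, ∑ j : Fin n, if j < i then -(α j * H i j * β i) else 0 := by
    rw [Finset.sum_comm]
    refine Finset.sum_congr rfl fun i _ => Finset.sum_congr rfl fun j _ => ?_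
    rcases lt_or_ge j i with h | h
    · simp only [h, if_pos]
      rw [hsk i j]
      ring_nf
    · simp [not_lt_of_ge h, not_lt.mpr h]
  rw [split, swap]
  unfold sigmaExp
  rw [← Finset.sum_sub_distrib, ← Finset.sum_add_distrib]
  refine Finset.sum_congr rfl fun i _ => ?_
  rw [← Finset.sum_sub_distrib, ← Finset.sum_add_distrib]
  refine Finset.sum_congr rfl fun j _ => ?_
  split <;> ring

/-- if `P ∈ GL_n(ℤ)` and `Pᵀ H P = H'`, then `L_q[H'] ≅ L_q[H]`
as ℂ-algebras, via the map sending the `i`-th generator `x'_i` of `L_q[H']` to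
the Laurent monomial `x^{α_i}` of `L_q[H]`, `α_i` the `i`-th column of `P`.
The algebras are presented by their bases of Laurent monomials. -/
theorem QLPA_iso_of_congruent (n : ℕ) (q : ℂ) (hq : q ≠ 0)
    (H H' : Matrix (Fin n) (Fin n) ℤ) (hskew : Hᵀ = -H) (hskew' : H'ᵀ = -H')
    (P : Matrix (Fin n) (Fin n) ℤ) (hP : IsUnit P.det)
    (hcong : Pᵀ * H * P = H')
    (L L' : Type*) [Ring L] [Algebra ℂ L] [Ring L'] [Algebra ℂ L']
    (B : Module.Basis (Fin n → ℤ) ℂ L) (hone : B 0 = 1)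
    (hmul : ∀ α β : Fin n → ℤ, B α * B β = q ^ sigmaExp H α β • B (α + β))
    (B' : Module.Basis (Fin n → ℤ) ℂ L') (hone' : B' 0 = 1)
    (hmul' : ∀ α β : Fin n → ℤ, B' α * B' β = q ^ sigmaExp H' α β • B' (α + β)) :
    ∃ φ : L' ≃ₐ[ℂ] L,
      ∀ i : Fin n, φ (B' (Pi.single i 1)) = B (fun k => P k i) := by
  -- the discrepancy bilinear form
  set f : (Fin n → ℤ) → (Fin n → ℤ) → ℤ :=
    fun α β => sigmaExp H (P *ᵥ α) (P *ᵥ β) - sigmaExp H' α β with hf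
  -- f is symmetric
  have hfsymm : ∀ α β, f α β = f β α := by
    intro α β
    have key : (P *ᵥ α) ⬝ᵥ H *ᵥ (P *ᵥ β) = α ⬝ᵥ H' *ᵥ β := by
      rw [← hcong, ← Matrix.mulVec_mulVec, ← Matrix.mulVec_mulVec,
        Matrix.dotProduct_mulVec α, Matrix.vecMul_transpose]
    have h1 := sigmaExp_sub_swap H hskew (P *ᵥ α) (P *ᵥ β)
    have h2 := sigmaExp_sub_swap H' hskew' α β
    simp only [hf]
    omega
  have hfaddl : ∀ α α' β, f (α + α') β = f α β + f α' β := by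
    intro α α' β
    simp only [hf, Matrix.mulVec_add, sigmaExp_add_left]
    ring
  have hfaddr : ∀ α β β', f α (β + β') = f α β + f α β' := by
    intro α β β'
    simp only [hf, Matrix.mulVec_add, sigmaExp_add_right]
    ring
  -- quadratic correction
  set g : (Fin n → ℤ) → ℤ :=
    fun α => f α α - ∑ i : Fin n, α i * f (Pi.single i 1) (Pi.single i 1) with hg
  have hgquad : ∀ α β, g (α + β) = g α + g β + 2 * f α β := by
    intro α β
    have h1 : f (α + β) (α + β) = f α α + f α β + f α β + f β β := by
      rw [hfaddl, hfaddr, hfaddr, hfsymm β α]; ring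
    simp only [hg, Pi.add_apply, add_mul, Finset.sum_add_distrib, h1]
    ring
  have hgsingle : ∀ i : Fin n, g (Pi.single i 1) = 0 := by
    intro i
    simp only [hg]
    rw [Finset.sum_eq_single i]
    · simp
    · intro j _ hj
      simp [Pi.single_eq_of_ne hj]
    · simp
  have hgzero : g 0 = 0 := by
    have := hgquad 0 0
    have hf00 : f 0 0 = 0 := by
      simp [hf, Matrix.mulVec_zero, sigmaExp_zero_left]
    simp only [add_zero] at this
    omega
  -- square root of q
  obtain ⟨r, hr⟩ := IsAlgClosed.exists_pow_nat_eq q (n := 2) (by norm_num)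
  have hr0 : r ≠ 0 := by
    intro h; apply hq; rw [← hr, h]; ring
  set ru : ℂˣ := Units.mk0 r hr0 with hru
  -- index bijection from P
  haveI : Invertible P := P.invertibleOfIsUnitDet hP
  set e : (Fin n → ℤ) ≃ (Fin n → ℤ) :=
    { toFun := fun v => P *ᵥ v
      invFun := fun v => (⅟P) *ᵥ v
      left_inv := fun v => by
        show (⅟P) *ᵥ (P *ᵥ v) = v
        rw [Matrix.mulVec_mulVec, invOf_mul_self, Matrix.one_mulVec]
      right_inv := fun v => by
        show P *ᵥ ((⅟P) *ᵥ v) = v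
        rw [Matrix.mulVec_mulVec, mul_invOf_self, Matrix.one_mulVec] } with he
  -- the twisted basis of L
  set C : Module.Basis (Fin n → ℤ) ℂ L :=
    (B.reindex e.symm).unitsSMul (fun β => ru ^ (g β)) with hC
  have hCapp : ∀ β, C β = (r ^ (g β) : ℂ) • B (P *ᵥ β) := by
    intro β
    rw [hC, Module.Basis.unitsSMul_apply, Module.Basis.reindex_apply, Equiv.symm_symm]
    simp [he, hru, Units.smul_def]
  set φ₀ : L' ≃ₗ[ℂ] L := B'.equiv C (Equiv.refl _) with hφ₀
  have hφ₀app : ∀ β, φ₀ (B' β) = (r ^ (g β) : ℂ) • B (P *ᵥ β) := by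
    intro β
    rw [hφ₀, Module.Basis.equiv_apply, Equiv.refl_apply, hCapp]
  -- q as a power of r, for zpow
  have hqz : ∀ m : ℤ, q ^ m = r ^ (2 * m) := by
    intro m
    rw [← hr, ← zpow_natCast r 2, ← _root_.zpow_mul]
    norm_num
  -- multiplicativity on basis elements
  have key : ∀ α β, φ₀ (B' α * B' β) = φ₀ (B' α) * φ₀ (B' β) := by
    intro α β
    rw [hmul', _root_.map_smul, hφ₀app, hφ₀app, hφ₀app, smul_mul_smul_comm, hmul,
      Matrix.mulVec_add, smul_smul, smul_smul]
    congr 1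
    rw [hqz, hqz, ← zpow_add₀ hr0, ← zpow_add₀ hr0, ← zpow_add₀ hr0]
    congr 1
    have := hgquad α β
    have : g (α + β) = g α + g β + 2 * (sigmaExp H (P *ᵥ α) (P *ᵥ β) - sigmaExp H' α β) := this
    push_cast
    omega
  have hone₀ : φ₀ 1 = 1 := by
    rw [← hone', hφ₀app, hgzero, Matrix.mulVec_zero, hone]
    norm_num
  have hmul₀ : ∀ x y : L', φ₀ (x * y) = φ₀ x * φ₀ y := by
    have hM : ((LinearMap.mul ℂ L').compr₂ φ₀.toLinearMap) =
        (((LinearMap.mul ℂ L).comp φ₀.toLinearMap).compl₂ φ₀.toLinearMap) := by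
      refine B'.ext fun α => B'.ext fun β => ?_
      simpa using key α β
    intro x y
    have := congrFun (congrArg (fun F => fun a b => F a b) hM) x
    exact congrFun this y
  refine ⟨AlgEquiv.ofLinearEquiv φ₀ hone₀ hmul₀, ?_⟩
  intro i
  show φ₀ (B' (Pi.single i 1)) = B (fun k => P k i)
  rw [hφ₀app, hgsingle]
  have : P *ᵥ Pi.single i 1 = fun k => P k i := by
    rw [Matrix.mulVec_single]
    simp
    rfl
  rw [this]
  norm_num
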